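/- Let χ be a character on X and T an X-tree, and let A ≠ B be two states of χ. If ω is a most parsimonious extension of χ to T in which the set of vertices assigned A forms one connected subtree and the set of vertices assigned B forms one connected subtree, then T contains a mutation edge e of ω whose generated split P|Q satisfies χ⁻¹(A) ⊆ P and χ⁻¹(B) ⊆ Q. -/

import Mathlib

open SimpleGraph

namespace PhyloMP

/-- The set of mutation edges of a vertex coloring `ω` of a graph:
edges whose two endpoints receive different states. -/
def mutationEdges {V C : Type} (g : SimpleGraph V) (ω : V → C) : Set (Sym2 V) :=
  {e | e ∈ g.edgeSet ∧ ∃ u v : V, e = s(u, v) ∧ ω u ≠ ω v}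

/-- An unrooted binary phylogenetic tree on taxon set `X`, with vertex set `V`:
a tree whose degree-1 vertices (leaves) are bijectively labeled by `X` and whose
other vertices have degree 3. -/
structure XTree (X V : Type) [Fintype V] where
  g : SimpleGraph V
  isTree : g.IsTree
  leaf : X → V
  leafInj : Function.Injective leaf
  leafDeg : ∀ x, (g.neighborSet (leaf x)).ncard = 1
  leavesOnly : ∀ v, (g.neighborSet v).ncard = 1 → ∃ x, leaf x = v
  internalDeg : ∀ v, (g.neighborSet v).ncard ≠ 1 → (g.neighborSet v).ncard = 3

variable {X V C : Type} [Fintype V]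

/-- `ω` extends the character `χ` to all vertices of `T`. -/
def IsExtension (T : XTree X V) (χ : X → C) (ω : V → C) : Prop :=
  ∀ x, ω (T.leaf x) = χ x

/-- The parsimony score `ℓ(T,χ)`: the minimum number of mutation edges over
all extensions of `χ` to `T`. -/
noncomputable def score (T : XTree X V) (χ : X → C) : ℕ :=
  sInf {n | ∃ ω : V → C, IsExtension T χ ω ∧ (mutationEdges T.g ω).ncard = n}

/-- A most parsimonious extension. -/
def IsMPExtension (T : XTree X V) (χ : X → C) (ω : V → C) : Prop :=
  IsExtension T χ ω ∧ (mutationEdges T.g ω).ncard = score T χ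

/-- `|χ|`: the number of states used by the character `χ`. -/
noncomputable def nStates {X C : Type} (χ : X → C) : ℕ := (Set.range χ).ncard

/-- `χ` is convex on `T`: its parsimony score equals its number of states minus one. -/
def IsConvex (T : XTree X V) (χ : X → C) : Prop := score T χ = nStates χ - 1

/-- The maximum parsimony distance between two `X`-trees. -/
noncomputable def dMP {V₁ V₂ : Type} [Fintype V₁] [Fintype V₂]
    (T₁ : XTree X V₁) (T₂ : XTree X V₂) : ℕ :=
  sSup {d | ∃ χ : X → ℕ, Nat.dist (score T₁ χ) (score T₂ χ) = d}

/-- A character achieving the maximum parsimony distance. -/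
def IsOptimal {V₁ V₂ : Type} [Fintype V₁] [Fintype V₂]
    (T₁ : XTree X V₁) (T₂ : XTree X V₂) (χ : X → C) : Prop :=
  Nat.dist (score T₁ χ) (score T₂ χ) = dMP T₁ T₂

/-- The forest induced by an extension `ω`: delete all mutation edges of `ω` from `T`. -/
noncomputable def forest (T : XTree X V) (ω : V → C) : SimpleGraph V :=
  T.g.deleteEdges (mutationEdges T.g ω)

/-- A connected component `c` of the forest `F` carries the state `s`. -/
def carries {V C : Type} (F : SimpleGraph V) (ω : V → C) (c : F.ConnectedComponent) (s : C) : Prop :=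
  ∃ v, F.connectedComponentMk v = c ∧ ω v = s

/-- The number of components of `F` carrying the state `s`. A state is *unique*
if this is 1 and *repeating* if this is at least 2. -/
noncomputable def stateMultiplicity {V C : Type} (F : SimpleGraph V) (ω : V → C) (s : C) : ℕ :=
  {c : F.ConnectedComponent | carries F ω c s}.ncard

/-- Relabel the state `A` as `B` in the character `χ`. -/
def relabel {X C : Type} [DecidableEq C] (χ : X → C) (A B : C) : X → C :=
  fun x => if χ x = A then B else χ x

/-- Two states `A`, `B` are adjacent (with respect to the coloring `ω`) if some edge of the
graph joins a vertex colored `A` to a vertex colored `B`; for distinct states, this edge is a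
mutation edge joining the corresponding components of the induced forest. -/
def statesAdjacent {V C : Type} (g : SimpleGraph V) (ω : V → C) (A B : C) : Prop :=
  ∃ u v, g.Adj u v ∧ ω u = A ∧ ω v = B

end PhyloMP

lemma crossing_edge_aux {V : Type} {g : SimpleGraph V} {S : Set V} {a b : V}
    (p : g.Walk a b) (hp : p.IsPath) (ha : a ∈ S) (hb : b ∉ S) :
    ∃ u v, g.Adj u v ∧ u ∈ S ∧ v ∉ S ∧
      (g.deleteEdges {s(u, v)}).Reachable v b := by
  induction p with
  | nil => exact absurd ha hb
  | @cons a c b h q ih =>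
    rw [SimpleGraph.Walk.cons_isPath_iff] at hp
    by_cases hc : c ∈ S
    · exact ih hp.1 hc hb
    · refine ⟨a, c, h, ha, hc, ?_⟩
      refine ⟨q.toDeleteEdges _ ?_⟩
      intro e he
      simp only [Set.mem_singleton_iff]
      rintro rfl
      exact hp.2 (SimpleGraph.Walk.fst_mem_support_of_mem_edges q he)

open PhyloMP in
/-- If in a most parsimonious extension `ω` the vertices colored `A` form
one connected subtree and likewise for `B`, then some mutation edge of `ω` generates a
split separating all the `A`-taxa from all the `B`-taxa. -/
theorem stmt_11 {X V C : Type} [Fintype V] (T : XTree X V) (χ : X → C)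
    (A B : C) (hAB : A ≠ B) (ω : V → C) (hω : IsMPExtension T χ ω)
    (hAconn : (T.g.induce {v : V | ω v = A}).Connected)
    (hBconn : (T.g.induce {v : V | ω v = B}).Connected) :
    ∃ u v : V, T.g.Adj u v ∧ ω u ≠ ω v ∧
      (∀ x, χ x = A → (T.g.deleteEdges {s(u, v)}).Reachable (T.leaf x) u) ∧
      (∀ x, χ x = B → (T.g.deleteEdges {s(u, v)}).Reachable (T.leaf x) v) := by
  classical
  obtain ⟨⟨a, ha⟩⟩ := hAconn.nonempty
  obtain ⟨⟨b, hb⟩⟩ := hBconn.nonempty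
  have ha : ω a = A := ha
  have hb : ω b = B := hb
  obtain ⟨w⟩ := T.isTree.isConnected.preconnected a b
  obtain ⟨u, v, huv, hu, hv, hreach⟩ :=
    crossing_edge_aux (S := {v : V | ω v = A}) (w.toPath : T.g.Walk a b) w.toPath.2 ha
      (by simp [Set.mem_setOf_eq, hb, (hAB.symm : B ≠ A)])
  have hu : ω u = A := hu
  have hv : ω v ≠ A := hv
  -- homomorphism from the induced A-subgraph into the deleted graph
  let homA : (T.g.induce {x : V | ω x = A}) →g (T.g.deleteEdges {s(u, v)}) := by
    refine ⟨Subtype.val, ?_⟩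
    intro x y hxy
    rw [SimpleGraph.deleteEdges_adj]
    refine ⟨hxy, ?_⟩
    simp only [Set.mem_singleton_iff, Sym2.eq_iff]
    rintro (⟨-, rfl⟩ | ⟨rfl, -⟩)
    · exact hv y.2
    · exact hv x.2
  let homB : (T.g.induce {x : V | ω x = B}) →g (T.g.deleteEdges {s(u, v)}) := by
    refine ⟨Subtype.val, ?_⟩
    intro x y hxy
    rw [SimpleGraph.deleteEdges_adj]
    refine ⟨hxy, ?_⟩
    simp only [Set.mem_singleton_iff, Sym2.eq_iff]
    have hUB : ω u ≠ B := by rw [hu]; exact hAB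
    rintro (⟨rfl, -⟩ | ⟨-, rfl⟩)
    · exact hUB x.2
    · exact hUB y.2
  refine ⟨u, v, huv, by rw [hu]; exact fun h => hv h.symm, ?_, ?_⟩
  · intro x hx
    have hxA : ω (T.leaf x) = A := by rw [hω.1 x, hx]
    exact (hAconn.preconnected ⟨T.leaf x, hxA⟩ ⟨u, hu⟩).map homA
  · intro x hx
    have hxB : ω (T.leaf x) = B := by rw [hω.1 x, hx]
    exact ((hBconn.preconnected ⟨T.leaf x, hxB⟩ ⟨b, hb⟩).map homB).trans hreach.symm
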